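/- For the metric g₁ = (x+y²) dx dy on the domain {x + y² > 0} ⊂ ℝ², the potential V = c₁/(x+y²) + c₂ y/(x+y²) + c₃ y(y²−3x)/(x+y²) + c₄ satisfies the Bertrand–Darboux compatibility with the Killing tensors arising from the projectively equivalent metrics g₂ = −2(x+y²)y^{−3} dx dy + (x+y²)² y^{−4} dy² and g₃: namely, the 1-form with components K_{ia} g₁^{ab} ∂_b V is closed, where K = (det g₁)^{2/3} (det g₂)^{−2/3} g₂ (indices of g₂ taken as a (0,2)-tensor), for all constants c₁,…,c₄. -/

import Mathlib

noncomputable def pX (f : ℝ → ℝ → ℝ) : ℝ → ℝ → ℝ := fun x y => deriv (fun t => f t y) x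
noncomputable def pY (f : ℝ → ℝ → ℝ) : ℝ → ℝ → ℝ := fun x y => deriv (fun t => f x t) y

/-- The potential of the generating system S₁ for the metric g₁ = (x+y²)dx dy. -/
noncomputable def Vpot (c1 c2 c3 c4 : ℝ) : ℝ → ℝ → ℝ := fun x y =>
  c1 / (x + y ^ 2) + c2 * y / (x + y ^ 2) + c3 * y * (y ^ 2 - 3 * x) / (x + y ^ 2) + c4

/-- det g₁ for g₁ = (x+y²) dx dy, i.e. matrix [[0,(x+y²)/2],[(x+y²)/2,0]]. -/
noncomputable def detg1 : ℝ → ℝ → ℝ := fun x y => -((x + y ^ 2) ^ 2 / 4)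

/-- det g₂ for g₂ = −2(x+y²)y⁻³ dx dy + (x+y²)²y⁻⁴ dy². -/
noncomputable def detg2 : ℝ → ℝ → ℝ := fun x y => -((x + y ^ 2) ^ 2 / y ^ 6)

/-- The weight factor (det g₁)^{2/3}(det g₂)^{-2/3} (with absolute values). -/
noncomputable def wfac : ℝ → ℝ → ℝ := fun x y => |detg1 x y / detg2 x y| ^ ((2 : ℝ) / 3)

/-- Components of the Killing tensor K = (det g₁)^{2/3}(det g₂)^{-2/3} g₂ of g₁
(as a (0,2)-tensor); g₂ has matrix [[0, −(x+y²)/y³],[−(x+y²)/y³, (x+y²)²/y⁴]]. -/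
noncomputable def Kt11 : ℝ → ℝ → ℝ := fun _ _ => 0
noncomputable def Kt12 : ℝ → ℝ → ℝ := fun x y => wfac x y * (-(x + y ^ 2) / y ^ 3)
noncomputable def Kt22 : ℝ → ℝ → ℝ := fun x y => wfac x y * ((x + y ^ 2) ^ 2 / y ^ 4)

/-- Components of g₁⁻¹ : [[0, 2/(x+y²)],[2/(x+y²), 0]]. -/
noncomputable def gi12 : ℝ → ℝ → ℝ := fun x y => 2 / (x + y ^ 2)

/-- Components of the 1-form ωᵢ = K_{ia} g₁^{ab} ∂_b V. -/
noncomputable def ω1 (c1 c2 c3 c4 : ℝ) : ℝ → ℝ → ℝ := fun x y =>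
  Kt11 x y * (gi12 x y * pY (Vpot c1 c2 c3 c4) x y)
    + Kt12 x y * (gi12 x y * pX (Vpot c1 c2 c3 c4) x y)
noncomputable def ω2 (c1 c2 c3 c4 : ℝ) : ℝ → ℝ → ℝ := fun x y =>
  Kt12 x y * (gi12 x y * pY (Vpot c1 c2 c3 c4) x y)
    + Kt22 x y * (gi12 x y * pX (Vpot c1 c2 c3 c4) x y)

noncomputable def Kc : ℝ := ((1:ℝ)/4) ^ ((2:ℝ)/3)

lemma wfac_eq (x y : ℝ) (hA : x + y ^ 2 ≠ 0) (hy : y ≠ 0) : wfac x y = y ^ 4 * Kc := by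
  have h : detg1 x y / detg2 x y = y ^ 6 * ((1:ℝ)/4) := by
    simp only [detg1, detg2]
    field_simp
  rw [wfac, h, abs_of_nonneg (by positivity)]
  rw [Real.mul_rpow (by positivity) (by norm_num), Kc]
  congr 1
  rw [show y ^ 6 = (y ^ 2) ^ (3:ℕ) from by ring, ← Real.rpow_natCast ((y:ℝ)^2) 3,
    ← Real.rpow_mul (sq_nonneg y)]
  norm_num
  ring

lemma vx_eq (c1 c2 c3 c4 x y : ℝ) (hA : x + y ^ 2 ≠ 0) :
    pX (Vpot c1 c2 c3 c4) x y = -(c1 + c2 * y + 4 * c3 * y ^ 3) / (x + y ^ 2) ^ 2 := by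
  have h1 : HasDerivAt (fun t : ℝ => t + y ^ 2) 1 x := by
    simpa using (hasDerivAt_id x).add_const (y ^ 2)
  have ha := (hasDerivAt_const x c1).div h1 hA
  have hb := (hasDerivAt_const x (c2 * y)).div h1 hA
  have hc := (((hasDerivAt_const x (y ^ 2)).sub
      ((hasDerivAt_id' x).const_mul (3:ℝ))).const_mul (c3 * y)).div h1 hA
  have h : HasDerivAt (fun t : ℝ =>
      c1 / (t + y ^ 2) + c2 * y / (t + y ^ 2) + c3 * y * (y ^ 2 - 3 * t) / (t + y ^ 2) + c4)
      (-(c1 + c2 * y + 4 * c3 * y ^ 3) / (x + y ^ 2) ^ 2) x := by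
    refine (((ha.add hb).add hc).add_const c4).congr_deriv ?_
    simp only [Pi.sub_apply, Pi.mul_apply]
    field_simp
    ring
  simp only [pX, Vpot]
  exact h.deriv

lemma vy_eq (c1 c2 c3 c4 x y : ℝ) (hA : x + y ^ 2 ≠ 0) :
    pY (Vpot c1 c2 c3 c4) x y =
      (c2 * x - 3 * c3 * x ^ 2 - c2 * y ^ 2 + c3 * y ^ 4 - 2 * c1 * y + 6 * c3 * x * y ^ 2)
        / (x + y ^ 2) ^ 2 := by
  have h1 : HasDerivAt (fun s : ℝ => x + s ^ 2) (2 * y) y := by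
    simpa using (hasDerivAt_pow 2 y).const_add x
  have ha := (hasDerivAt_const y c1).div h1 hA
  have hb := ((hasDerivAt_id' y).const_mul c2).div h1 hA
  have hc := (((hasDerivAt_id' y).const_mul c3).mul
      ((hasDerivAt_pow 2 y).sub_const (3 * x))).div h1 hA
  have h : HasDerivAt (fun s : ℝ =>
      c1 / (x + s ^ 2) + c2 * s / (x + s ^ 2) + c3 * s * (s ^ 2 - 3 * x) / (x + s ^ 2) + c4)
      ((c2 * x - 3 * c3 * x ^ 2 - c2 * y ^ 2 + c3 * y ^ 4 - 2 * c1 * y + 6 * c3 * x * y ^ 2)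
        / (x + y ^ 2) ^ 2) y := by
    refine (((ha.add hb).add hc).add_const c4).congr_deriv ?_
    simp only [Pi.sub_apply, Pi.mul_apply]
    field_simp
    ring
  simp only [pY, Vpot]
  exact h.deriv

lemma omega1_eq (c1 c2 c3 c4 x y : ℝ) (hA : x + y ^ 2 ≠ 0) (hy : y ≠ 0) :
    ω1 c1 c2 c3 c4 x y =
      Kc * ((2 * c1) * y + (2 * c2) * y ^ 2 + (8 * c3) * y ^ 4) / (x + y ^ 2) ^ 2 := by
  simp only [ω1, Kt11, Kt12, gi12, wfac_eq x y hA hy, vx_eq c1 c2 c3 c4 x y hA]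
  field_simp
  ring

lemma omega2_eq (c1 c2 c3 c4 x y : ℝ) (hA : x + y ^ 2 ≠ 0) (hy : y ≠ 0) :
    ω2 c1 c2 c3 c4 x y =
      Kc * ((-(2 * c1)) * (x - y ^ 2) + (-(4 * c2 * y)) * x + (6 * c3 * y) * x ^ 2
        + (-(20 * c3 * y ^ 3)) * x + (-(10 * c3 * y ^ 5))) / (x + y ^ 2) ^ 2 := by
  simp only [ω2, Kt12, Kt22, gi12, wfac_eq x y hA hy, vx_eq c1 c2 c3 c4 x y hA,
    vy_eq c1 c2 c3 c4 x y hA]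
  field_simp
  ring


/-- for the metric g₁ = (x+y²) dx dy on {x+y² > 0, y ≠ 0}, the
potential V = c₁/(x+y²) + c₂y/(x+y²) + c₃y(y²−3x)/(x+y²) + c₄ satisfies the
Bertrand–Darboux equation (closedness of ωᵢ = K_{ia} g₁^{ab}∂_bV) for the
Killing tensor K = (det g₁)^{2/3}(det g₂)^{-2/3} g₂ arising from the
projectively equivalent metric g₂, for all constants c₁,…,c₄. -/
theorem stmt_11 :
    ∀ (c1 c2 c3 c4 : ℝ) (x y : ℝ), 0 < x + y ^ 2 → y ≠ 0 →
      pX (ω2 c1 c2 c3 c4) x y = pY (ω1 c1 c2 c3 c4) x y := by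
  intro c1 c2 c3 c4 x y hA hy
  have hA' : x + y ^ 2 ≠ 0 := ne_of_gt hA
  -- left side
  have hevx : ∀ᶠ t in nhds x, 0 < t + y ^ 2 := by
    have hopen : IsOpen {t : ℝ | 0 < t + y ^ 2} :=
      isOpen_lt continuous_const (continuous_id.add continuous_const)
    exact hopen.eventually_mem hA
  have hLeq : (fun t => ω2 c1 c2 c3 c4 t y) =ᶠ[nhds x]
      (fun t => Kc * ((-(2 * c1)) * (t - y ^ 2) + (-(4 * c2 * y)) * t + (6 * c3 * y) * t ^ 2
        + (-(20 * c3 * y ^ 3)) * t + (-(10 * c3 * y ^ 5))) / (t + y ^ 2) ^ 2) :=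
    hevx.mono fun t ht => omega2_eq c1 c2 c3 c4 t y (ne_of_gt ht) hy
  have hLd : HasDerivAt (fun t : ℝ =>
      Kc * ((-(2 * c1)) * (t - y ^ 2) + (-(4 * c2 * y)) * t + (6 * c3 * y) * t ^ 2
        + (-(20 * c3 * y ^ 3)) * t + (-(10 * c3 * y ^ 5))) / (t + y ^ 2) ^ 2)
      (Kc * (2 * c1 * x - 6 * c1 * y ^ 2 + 4 * c2 * x * y - 4 * c2 * y ^ 3
        + 32 * c3 * x * y ^ 3) / (x + y ^ 2) ^ 3) x := by
    have hnum : HasDerivAt (fun t : ℝ =>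
        (-(2 * c1)) * (t - y ^ 2) + (-(4 * c2 * y)) * t + (6 * c3 * y) * t ^ 2
          + (-(20 * c3 * y ^ 3)) * t + (-(10 * c3 * y ^ 5)))
        ((-(2 * c1)) * 1 + (-(4 * c2 * y)) * 1 + (6 * c3 * y) * (2 * x)
          + (-(20 * c3 * y ^ 3)) * 1) x := by
      have ht : HasDerivAt (fun t : ℝ => t) 1 x := hasDerivAt_id' x
      have ht2 : HasDerivAt (fun t : ℝ => t ^ 2) (2 * x) x := by
        simpa using hasDerivAt_pow 2 x
      exact (((((ht.sub_const (y ^ 2)).const_mul (-(2 * c1))).add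
        (ht.const_mul (-(4 * c2 * y)))).add (ht2.const_mul (6 * c3 * y))).add
        (ht.const_mul (-(20 * c3 * y ^ 3)))).add_const _
    have hden : HasDerivAt (fun t : ℝ => (t + y ^ 2) ^ 2) (2 * (x + y ^ 2)) x := by
      have h1 : HasDerivAt (fun t : ℝ => t + y ^ 2) 1 x := by
        simpa using (hasDerivAt_id x).add_const (y ^ 2)
      simpa using h1.fun_pow 2
    have := (hnum.const_mul Kc).div hden (by positivity)
    refine this.congr_deriv ?_
    field_simp
    ring
  -- right side
  have hevy : ∀ᶠ s in nhds y, 0 < x + s ^ 2 ∧ s ≠ 0 := by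
    have hopen : IsOpen {s : ℝ | 0 < x + s ^ 2 ∧ s ≠ 0} := by
      apply IsOpen.inter
      · exact isOpen_lt continuous_const (continuous_const.add (continuous_pow 2))
      · exact isOpen_compl_singleton
    exact hopen.eventually_mem ⟨hA, hy⟩
  have hReq : (fun s => ω1 c1 c2 c3 c4 x s) =ᶠ[nhds y]
      (fun s => Kc * ((2 * c1) * s + (2 * c2) * s ^ 2 + (8 * c3) * s ^ 4) / (x + s ^ 2) ^ 2) :=
    hevy.mono fun s hs => omega1_eq c1 c2 c3 c4 x s (ne_of_gt hs.1) hs.2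
  have hRd : HasDerivAt (fun s : ℝ =>
      Kc * ((2 * c1) * s + (2 * c2) * s ^ 2 + (8 * c3) * s ^ 4) / (x + s ^ 2) ^ 2)
      (Kc * (2 * c1 * x - 6 * c1 * y ^ 2 + 4 * c2 * x * y - 4 * c2 * y ^ 3
        + 32 * c3 * x * y ^ 3) / (x + y ^ 2) ^ 3) y := by
    have hs : HasDerivAt (fun s : ℝ => s) 1 y := hasDerivAt_id' y
    have hs2 : HasDerivAt (fun s : ℝ => s ^ 2) (2 * y) y := by
      simpa using hasDerivAt_pow 2 y
    have hs4 : HasDerivAt (fun s : ℝ => s ^ 4) (4 * y ^ 3) y := by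
      simpa using hasDerivAt_pow 4 y
    have hnum : HasDerivAt (fun s : ℝ =>
        (2 * c1) * s + (2 * c2) * s ^ 2 + (8 * c3) * s ^ 4)
        ((2 * c1) * 1 + (2 * c2) * (2 * y) + (8 * c3) * (4 * y ^ 3)) y :=
      ((hs.const_mul (2 * c1)).add (hs2.const_mul (2 * c2))).add (hs4.const_mul (8 * c3))
    have hden : HasDerivAt (fun s : ℝ => (x + s ^ 2) ^ 2) (2 * (x + y ^ 2) * (2 * y)) y := by
      have h1 : HasDerivAt (fun s : ℝ => x + s ^ 2) (2 * y) y := by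
        simpa using (hasDerivAt_pow 2 y).const_add x
      simpa [mul_comm, mul_assoc] using h1.fun_pow 2
    have := (hnum.const_mul Kc).div hden (by positivity)
    refine this.congr_deriv ?_
    field_simp
    ring
  simp only [pX, pY]
  rw [hLeq.deriv_eq, hReq.deriv_eq, hLd.deriv, hRd.deriv]
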